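/- Let n ≥ 1, let A be an invertible real n×n matrix with all entries of A⁻¹ nonnegative, let D be a real n×n diagonal matrix with diagonal entries d_k > 0 and let B be a real n×n matrix with nonnegative column sums such that A = D + B. If F ∈ ℝⁿ has all components strictly positive and x = A⁻¹F, then for every index k one has 0 < x_k ≤ (∑_j F_j)/d_k. -/
import Mathlib


open Matrix BigOperators

/-- positivity and componentwise bound for `x = A⁻¹ F`, where
`A = D + B` is invertible with nonnegative inverse, `D` positive diagonal,
`B` with nonnegative column sums, and `F` entrywise positive. -/
theorem solution_positive_and_bounded
    (n : ℕ) (hn : 1 ≤ n) (A : Matrix (Fin n) (Fin n) ℝ)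
    (hA : IsUnit A.det) (hAinv : ∀ i j, 0 ≤ A⁻¹ i j)
    (d : Fin n → ℝ) (hd : ∀ k, 0 < d k)
    (B : Matrix (Fin n) (Fin n) ℝ) (hBcol : ∀ j, 0 ≤ ∑ i, B i j)
    (hAeq : A = Matrix.diagonal d + B)
    (F : Fin n → ℝ) (hF : ∀ k, 0 < F k)
    (x : Fin n → ℝ) (hx : x = A⁻¹ *ᵥ F) :
    ∀ k, 0 < x k ∧ x k ≤ (∑ j, F j) / d k := by
  intro k
  have hAx : A *ᵥ x = F := by
    rw [hx, Matrix.mulVec_mulVec, Matrix.mul_nonsing_inv A hA, Matrix.one_mulVec]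
  have hxnn : ∀ j, 0 ≤ x j := by
    intro j
    rw [hx, Matrix.mulVec, dotProduct]
    exact Finset.sum_nonneg fun i _ => mul_nonneg (hAinv j i) (hF i).le
  have hxpos : 0 < x k := by
    rcases lt_or_eq_of_le (hxnn k) with h | h
    · exact h
    · exfalso
      have hsum : ∑ j, A⁻¹ k j * F j = 0 := by
        have : x k = ∑ j, A⁻¹ k j * F j := by
          rw [hx]; rfl
        rw [← this, ← h]
      have hzero : ∀ j, A⁻¹ k j = 0 := by
        intro j
        have := (Finset.sum_eq_zero_iff_of_nonneg
          (fun i _ => mul_nonneg (hAinv k i) (hF i).le)).mp hsum j (Finset.mem_univ j)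
        exact (mul_eq_zero.mp this).resolve_right (ne_of_gt (hF j))
      have h1 : (A⁻¹ * A) k k = (1 : ℝ) := by
        rw [Matrix.nonsing_inv_mul A hA]; simp
      rw [Matrix.mul_apply] at h1
      simp [hzero] at h1
  refine ⟨hxpos, ?_⟩
  have hcol : ∀ j, ∑ i, A i j = d j + ∑ i, B i j := by
    intro j
    rw [hAeq]
    simp [Matrix.add_apply, Finset.sum_add_distrib, Matrix.diagonal_apply,
      Finset.sum_ite_eq]
  have hcolnn : ∀ j, 0 ≤ ∑ i, A i j := by
    intro j
    rw [hcol j]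
    linarith [hd j, hBcol j]
  have hsumF : ∑ i, F i = ∑ j, (∑ i, A i j) * x j := by
    rw [← hAx]
    simp only [Matrix.mulVec, dotProduct]
    rw [Finset.sum_comm]
    simp [Finset.sum_mul]
  have hkey : d k * x k ≤ ∑ i, F i := by
    rw [hsumF]
    calc d k * x k ≤ (∑ i, A i k) * x k := by
          apply mul_le_mul_of_nonneg_right _ (hxnn k)
          rw [hcol k]; linarith [hBcol k]
      _ ≤ ∑ j, (∑ i, A i j) * x j :=
          Finset.single_le_sum (f := fun j => (∑ i, A i j) * x j)
            (fun j _ => mul_nonneg (hcolnn j) (hxnn j)) (Finset.mem_univ k)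
  rw [le_div_iff₀ (hd k)]
  linarith
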